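/- If D is an indecomposable acyclic digraph with at least two vertices, then the 𝔽₂-rank of the submatrix A_D[L₀(D), V(D)∖L₀(D)] equals |L₀(D)|, the number of roots of D. -/

import Mathlib

/-- Local complementation at `v`: arc set `A(D) Δ (N⁻_D(v) × N⁺_D(v))`. -/
def localComp {V : Type*} (R : V → V → Prop) (v : V) : V → V → Prop :=
  fun x y => Xor' (R x y) (R x v ∧ R v y)

/-- The slide on `uv`: arc set `A(D) Δ {(v,w) : w ∈ N⁺_D(u)}`. -/
def slideRel {V : Type*} (R : V → V → Prop) (u v : V) : V → V → Prop :=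
  fun x y => Xor' (R x y) (x = v ∧ R u y)

/-- A digraph is acyclic if it has no directed cycle. -/
def AcyclicRel {V : Type*} (R : V → V → Prop) : Prop :=
  ∀ v : V, ¬ Relation.TransGen R v v

/-- One graph operation: a local complementation or a legal slide. -/
inductive GStep {V : Type*} : (V → V → Prop) → (V → V → Prop) → Prop
  | lc (R : V → V → Prop) (v : V) : GStep R (localComp R v)
  | sl (R : V → V → Prop) (u v : V) (h : u ≠ v) (hN : ∀ w, R w u ↔ R w v) :
      GStep R (slideRel R u v)

/-- Bott equivalence of digraphs. -/
def BottEquivD {V : Type*} {W : Type*} (R : V → V → Prop) (S : W → W → Prop) : Prop :=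
  ∃ R' : V → V → Prop, Relation.ReflTransGen GStep R R' ∧
    ∃ e : V ≃ W, ∀ a b : V, R' a b ↔ S (e a) (e b)

/-- A digraph is connected if its underlying undirected graph is connected. -/
def ConnectedRel {V : Type*} (R : V → V → Prop) : Prop :=
  ∀ a b : V, Relation.ReflTransGen (fun x y => R x y ∨ R y x) a b

/-- An acyclic digraph is indecomposable if every acyclic digraph Bott
equivalent to it is connected. -/
def IndecompD {V : Type*} [Fintype V] (R : V → V → Prop) : Prop :=
  ∀ (m : ℕ) (S : Fin m → Fin m → Prop), BottEquivD R S → ConnectedRel S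

open Classical in
/-- The row of the adjacency matrix of `R` indexed by `u` over `𝔽₂`. -/
noncomputable def rowVec {V : Type*} (R : V → V → Prop) (u : V) : V → ZMod 2 :=
  fun y => if R u y then 1 else 0

/-- The `𝔽₂`-row space of the submatrix `A_R[L₀(R), V∖L₀(R)]` (rows indexed by
the roots of `R`; columns at roots vanish automatically). -/
noncomputable def rootRowSpace {V : Type*} (R : V → V → Prop) :
    Submodule (ZMod 2) (V → ZMod 2) :=
  Submodule.span (ZMod 2) {f | ∃ u : V, (∀ w, ¬ R w u) ∧ f = rowVec R u}

open Classical

lemma zmod2_ite_xor (P Q : Prop) [Decidable P] [Decidable Q] :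
    ((if Xor' P Q then (1:ZMod 2) else 0)) = (if P then 1 else 0) + (if Q then 1 else 0) := by
  by_cases hP : P <;> by_cases hQ : Q <;> simp [Xor', hP, hQ]
  decide

lemma slide_chain {V : Type*} [Fintype V] (D : V → V → Prop) (u₀ : V)
    (h₀ : ∀ x, ¬ D x u₀) (T : Finset V) :
    (∀ u ∈ T, (∀ x, ¬ D x u) ∧ u ≠ u₀) →
    ∃ R' : V → V → Prop, Relation.ReflTransGen GStep D R' ∧
      (∀ w, (∀ x, ¬ D x w) → ∀ x, ¬ R' x w) ∧
      rowVec R' u₀ = rowVec D u₀ + ∑ u ∈ T, rowVec D u ∧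
      (∀ x y, x ≠ u₀ → (R' x y ↔ D x y)) := by
  classical
  induction T using Finset.induction_on with
  | empty =>
    intro _
    exact ⟨D, .refl, fun w hw => hw, by simp, fun _ _ _ => Iff.rfl⟩
  | insert a T ha ih =>
    intro hT
    obtain ⟨R', hsteps, hroots, hrow, hother⟩ :=
      ih (fun u hu => hT u (Finset.mem_insert_of_mem hu))
    obtain ⟨ha_root, ha_ne⟩ := hT a (Finset.mem_insert_self a T)
    have hN : ∀ w, R' w a ↔ R' w u₀ := fun w =>
      iff_of_false (hroots a ha_root w) (hroots u₀ h₀ w)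
    refine ⟨slideRel R' a u₀, hsteps.tail (GStep.sl R' a u₀ ha_ne hN), ?_, ?_, ?_⟩
    · intro w hw x hxw
      rcases hxw with ⟨h1, -⟩ | ⟨⟨-, h2⟩, -⟩
      · exact hroots w hw x h1
      · exact hroots w hw a h2
    · funext y
      have h1 : slideRel R' a u₀ u₀ y ↔ Xor' (R' u₀ y) (R' a y) := by
        simp [slideRel]
      have h2 : R' a y ↔ D a y := hother a y ha_ne
      have h3 : rowVec (slideRel R' a u₀) u₀ y
          = rowVec R' u₀ y + rowVec D a y := by
        simp only [rowVec]
        rw [if_congr (h1.trans (by rw [h2])) rfl rfl]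
        exact zmod2_ite_xor _ _
      rw [h3, hrow, Finset.sum_insert ha]
      simp only [Pi.add_apply]
      ring
    · intro x y hx
      have h4 : slideRel R' a u₀ x y ↔ R' x y := by
        simp [slideRel, Xor', Xor, hx]
      rw [h4]
      exact hother x y hx

theorem rank_eq_card_roots {V : Type*} [Fintype V]
    (hcard : 2 ≤ Fintype.card V) (D : V → V → Prop)
    (hac : AcyclicRel D) (hind : IndecompD D) :
    Module.finrank (ZMod 2) ↥(rootRowSpace D) =
      Nat.card {v : V // ∀ w, ¬ D w v} := by
  classical
  -- linear independence of root rows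
  have hli : LinearIndependent (ZMod 2)
      (fun i : {v : V // ∀ w, ¬ D w v} => rowVec D i.1) := by
    rw [Fintype.linearIndependent_iff]
    intro g hg
    by_contra hne
    push_neg at hne
    obtain ⟨i₀, hi₀⟩ := hne
    have hzm : ∀ x : ZMod 2, x ≠ 0 → x = 1 := by decide
    have hg1 : g i₀ = 1 := hzm _ hi₀
    set Sg : Finset {v : V // ∀ w, ¬ D w v} :=
      Finset.univ.filter (fun i => g i = 1) with hSg
    have hi₀S : i₀ ∈ Sg := by simp [hSg, hg1]
    -- sum over Sg of rows is 0
    have hsum : ∑ i ∈ Sg, rowVec D i.1 = 0 := by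
      rw [← hg]
      rw [Finset.sum_filter]
      apply Finset.sum_congr rfl
      intro i _
      rcases (by decide : ∀ x : ZMod 2, x = 0 ∨ x = 1) (g i) with h | h <;>
        simp [h]
    -- set of other root vertices
    set T : Finset V := (Sg.erase i₀).image Subtype.val with hTdef
    have hTsum : ∑ u ∈ T, rowVec D u = ∑ i ∈ Sg.erase i₀, rowVec D i.1 := by
      rw [hTdef]
      exact Finset.sum_image (fun x _ y _ h => Subtype.ext h)
    have hT : ∀ u ∈ T, (∀ x, ¬ D x u) ∧ u ≠ i₀.1 := by
      intro u hu
      rw [hTdef, Finset.mem_image] at hu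
      obtain ⟨i, hi, rfl⟩ := hu
      refine ⟨i.2, fun h => (Finset.mem_erase.mp hi).1 (Subtype.ext h)⟩
    obtain ⟨R', hsteps, hroots, hrow, -⟩ := slide_chain D i₀.1 i₀.2 T hT
    have hrow0 : rowVec R' i₀.1 = 0 := by
      have he2 : rowVec D i₀.1 + ∑ i ∈ Sg.erase i₀, rowVec D i.1
          = ∑ i ∈ Sg, rowVec D i.1 :=
        Finset.add_sum_erase Sg (fun i => rowVec D i.1) hi₀S
      rw [hrow, hTsum, he2, hsum]
    have hout : ∀ y, ¬ R' i₀.1 y := by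
      intro y hy
      have : rowVec R' i₀.1 y = 1 := by simp [rowVec, hy]
      rw [hrow0] at this
      exact one_ne_zero this.symm
    have hin : ∀ x, ¬ R' x i₀.1 := hroots i₀.1 i₀.2
    -- build the Bott-equivalent digraph on Fin n
    set e : V ≃ Fin (Fintype.card V) := Fintype.equivFin V with he
    set S : Fin (Fintype.card V) → Fin (Fintype.card V) → Prop :=
      fun a b => R' (e.symm a) (e.symm b) with hSdef
    have hbe : BottEquivD D S := ⟨R', hsteps, e, fun a b => by simp [hSdef]⟩
    have hconn := hind _ S hbe
    obtain ⟨b, hb⟩ := Fintype.exists_ne_of_one_lt_card (by omega) i₀.1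
    have hpath := hconn (e i₀.1) (e b)
    have hiso : ∀ z, Relation.ReflTransGen
        (fun x y => S x y ∨ S y x) (e i₀.1) z → z = e i₀.1 := by
      intro z hz
      induction hz with
      | refl => rfl
      | tail hp hstep ih2 =>
        subst ih2
        rcases hstep with h | h <;> rw [hSdef] at h <;> simp only [Equiv.symm_apply_apply] at h
        · exact absurd h (hout _)
        · exact absurd h (hin _)
    have := hiso _ hpath
    exact hb (e.injective this)
  -- compute the rank
  have hset : {f | ∃ u : V, (∀ w, ¬ D w u) ∧ f = rowVec D u} =
      Set.range (fun i : {v : V // ∀ w, ¬ D w v} => rowVec D i.1) := by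
    ext f
    constructor
    · rintro ⟨u, hu, rfl⟩; exact ⟨⟨u, hu⟩, rfl⟩
    · rintro ⟨i, rfl⟩; exact ⟨i.1, i.2, rfl⟩
  rw [rootRowSpace, hset, finrank_span_eq_card hli, Nat.card_eq_fintype_card]
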